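/- Let h be a quaternion. Then conj(h) * i * h + i = 0 if and only if h.re = 0, h.imI = 0, and (h.imJ)^2 + (h.imK)^2 = 1. (This is the equivalence, proved in the paper for the affine chart of ℍP^1, between the zero set of the moment map μ(h) = conj(h)·i·h + i and the focal circle {α = β = 0, γ² + δ² = 1}.) -/

import Mathlib

open Quaternion

/-- The imaginary unit `i` of the quaternions. -/
noncomputable def qi : Quaternion ℝ := ⟨0, 1, 0, 0⟩

theorem qh_qi_re : qi.re = 0 := rfl
theorem qh_qi_imI : qi.imI = 1 := rfl
theorem qh_qi_imJ : qi.imJ = 0 := rfl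
theorem qh_qi_imK : qi.imK = 0 := rfl
theorem qh_ext_iff (x y : Quaternion ℝ) :
    x = y ↔ x.re = y.re ∧ x.imI = y.imI ∧ x.imJ = y.imJ ∧ x.imK = y.imK :=
  Quaternion.ext_iff
theorem qh_re_add (x y : Quaternion ℝ) : (x + y).re = x.re + y.re := Quaternion.re_add x y
theorem qh_imI_add (x y : Quaternion ℝ) : (x + y).imI = x.imI + y.imI := Quaternion.imI_add x y
theorem qh_imJ_add (x y : Quaternion ℝ) : (x + y).imJ = x.imJ + y.imJ := Quaternion.imJ_add x y
theorem qh_imK_add (x y : Quaternion ℝ) : (x + y).imK = x.imK + y.imK := Quaternion.imK_add x y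
theorem qh_re_mul (x y : Quaternion ℝ) :
    (x * y).re = x.re * y.re - x.imI * y.imI - x.imJ * y.imJ - x.imK * y.imK :=
  Quaternion.re_mul x y
theorem qh_imI_mul (x y : Quaternion ℝ) :
    (x * y).imI = x.re * y.imI + x.imI * y.re + x.imJ * y.imK - x.imK * y.imJ :=
  Quaternion.imI_mul x y
theorem qh_imJ_mul (x y : Quaternion ℝ) :
    (x * y).imJ = x.re * y.imJ - x.imI * y.imK + x.imJ * y.re + x.imK * y.imI :=
  Quaternion.imJ_mul x y
theorem qh_imK_mul (x y : Quaternion ℝ) :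
    (x * y).imK = x.re * y.imK + x.imI * y.imJ - x.imJ * y.imI + x.imK * y.re :=
  Quaternion.imK_mul x y
theorem qh_re_star (x : Quaternion ℝ) : (star x).re = x.re := Quaternion.re_star x
theorem qh_imI_star (x : Quaternion ℝ) : (star x).imI = -x.imI := Quaternion.imI_star x
theorem qh_imJ_star (x : Quaternion ℝ) : (star x).imJ = -x.imJ := Quaternion.imJ_star x
theorem qh_imK_star (x : Quaternion ℝ) : (star x).imK = -x.imK := Quaternion.imK_star x
theorem qh_re_zero : (0 : Quaternion ℝ).re = 0 := rfl
theorem qh_imI_zero : (0 : Quaternion ℝ).imI = 0 := rfl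
theorem qh_imJ_zero : (0 : Quaternion ℝ).imJ = 0 := rfl
theorem qh_imK_zero : (0 : Quaternion ℝ).imK = 0 := rfl

/-- The zero set of the moment map `μ(h) = conj(h)·i·h + i` in the affine chart of `ℍP¹`
coincides with the focal circle `{α = β = 0, γ² + δ² = 1}`. -/
theorem stmt_0 (h : Quaternion ℝ) :
    star h * qi * h + qi = 0 ↔
      h.re = 0 ∧ h.imI = 0 ∧ h.imJ ^ 2 + h.imK ^ 2 = 1 := by
  simp only [qh_qi_re, qh_qi_imI, qh_qi_imJ, qh_qi_imK, qh_ext_iff, qh_re_add, qh_imI_add,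
    qh_imJ_add, qh_imK_add, qh_re_mul, qh_imI_mul,
    qh_imJ_mul, qh_imK_mul, qh_re_star, qh_imI_star,
    qh_imJ_star, qh_imK_star, qh_re_zero, qh_imI_zero,
    qh_imJ_zero, qh_imK_zero]
  obtain ⟨a, b, c, d⟩ := h
  dsimp only
  constructor
  · rintro ⟨h1, h2, h3, h4⟩
    refine ⟨?_, ?_, ?_⟩ <;> nlinarith [sq_nonneg a, sq_nonneg b, sq_nonneg c, sq_nonneg d,
      sq_nonneg (a+b), sq_nonneg (a-b), sq_nonneg (c+d), sq_nonneg (c-d)]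
  · rintro ⟨h1, h2, h3⟩
    subst h1 h2
    refine ⟨by ring, by nlinarith, by ring, by ring⟩
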